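/- Let (E,‖·‖) be a complex Banach space, p, q positive integers and s ≥ 0. A formal power series f̂ ∈ E[[x₁,x₂]] is s-Gevrey in the monomial x₁^p x₂^q if and only if f̂∘π₁ is s-Gevrey in the monomial x₁^p x₂^{p+q} and f̂∘π₂ is s-Gevrey in the monomial x₁^{p+q} x₂^q. -/

import Mathlib

open Filter
open scoped Topology

noncomputable section

variable {E : Type*} [NormedAddCommGroup E] [NormedSpace ℂ E] [CompleteSpace E]

/-- A formal power series `Σ a n m x₁^n x₂^m ∈ E[[x₁,x₂]]` (given by its coefficients) is
convergent if `Σ ‖a n m‖ ρ^(n+m) < ∞` for some `ρ > 0`. -/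
def PSConvergent (a : ℕ → ℕ → E) : Prop :=
  ∃ ρ : ℝ, 0 < ρ ∧ Summable fun nm : ℕ × ℕ => ‖a nm.1 nm.2‖ * ρ ^ (nm.1 + nm.2)

/-- `s`-Gevrey in the monomial `x₁^p x₂^q` (coefficient characterization). -/
def MonomialGevrey (s : ℝ) (p q : ℕ) (a : ℕ → ℕ → E) : Prop :=
  ∃ C A : ℝ, 0 < C ∧ 0 < A ∧ ∀ n m : ℕ,
    ‖a n m‖ ≤ C * A ^ (n + m) *
      min ((n.factorial : ℝ) ^ (s / (p : ℝ))) ((m.factorial : ℝ) ^ (s / (q : ℝ)))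

/-- The index set `{(m,j) | m < p ∨ j < q}` of the `(p,q)`-coefficient functions. -/
def coeffIndex (p q : ℕ) : Set (ℕ × ℕ) := {mj | mj.1 < p ∨ mj.2 < q}

/-- The `(p,q)`-coefficient function `f_n(x₁,x₂) = Σ_{(m,j) : m<p ∨ j<q} a_{np+m,nq+j} x₁^m x₂^j`. -/
def coeffFn (a : ℕ → ℕ → E) (p q n : ℕ) (x : ℂ × ℂ) : E :=
  ∑' mj : coeffIndex p q, (x.1 ^ mj.1.1 * x.2 ^ mj.1.2) • a (n * p + mj.1.1) (n * q + mj.1.2)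

/-- All the `(p,q)`-coefficient functions of `a` converge and define bounded holomorphic
maps on the polydisk of radius `r`. -/
def CoeffFnGood (a : ℕ → ℕ → E) (p q : ℕ) (r : ℝ) : Prop :=
  ∀ n : ℕ,
    (∀ x : ℂ × ℂ, ‖x.1‖ < r → ‖x.2‖ < r →
      Summable fun mj : coeffIndex p q =>
        (x.1 ^ mj.1.1 * x.2 ^ mj.1.2) • a (n * p + mj.1.1) (n * q + mj.1.2)) ∧
    DifferentiableOn ℂ (coeffFn a p q n)
      {x : ℂ × ℂ | ‖x.1‖ < r ∧ ‖x.2‖ < r} ∧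
    ∃ M : ℝ, ∀ x : ℂ × ℂ, ‖x.1‖ < r → ‖x.2‖ < r → ‖coeffFn a p q n x‖ ≤ M

/-- The monomial sector `Π_{p,q}(a,b,r)`. -/
def MSector (p q : ℕ) (a b r : ℝ) : Set (ℂ × ℂ) :=
  {x | x.1 ≠ 0 ∧ x.2 ≠ 0 ∧ ‖x.1‖ ^ p < r ∧ ‖x.2‖ ^ q < r ∧
    ∃ θ : ℝ, a < θ ∧ θ < b ∧
      x.1 ^ p * x.2 ^ q = (‖x.1 ^ p * x.2 ^ q‖ : ℂ) * Complex.exp (θ * Complex.I)}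

/-- `f` has the series `a` as `s`-Gevrey asymptotic expansion in `x₁^p x₂^q` on the
monomial sector `Π_{p,q}(a₀,b₀,r)`. -/
def HasMAsymp (a : ℕ → ℕ → E) (s : ℝ) (p q : ℕ) (f : ℂ × ℂ → E) (a₀ b₀ r : ℝ) : Prop :=
  ∃ r' : ℝ, 0 < r' ∧ r' ≤ r ∧ CoeffFnGood a p q r' ∧
    ∀ a' b' ρ : ℝ, a₀ < a' → a' < b' → b' < b₀ → 0 < ρ → ρ < r' →
      ∃ C A : ℝ, 0 < C ∧ 0 < A ∧ ∀ N : ℕ, ∀ x ∈ MSector p q a' b' ρ,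
        ‖f x - ∑ n ∈ Finset.range N, (x.1 ^ p * x.2 ^ q) ^ n • coeffFn a p q n x‖ ≤
          C * A ^ N * (N.factorial : ℝ) ^ s * ‖x.1 ^ p * x.2 ^ q‖ ^ N

/-- `f` is a `k`-sum of the series `a` in the monomial `x₁^p x₂^q` in direction `d` :
it is holomorphic on a monomial sector bisected by `d` of opening `> π/k` and has `a`
as `(1/k)`-Gevrey asymptotic expansion in `x₁^p x₂^q` there. -/
def IsMSum (a : ℕ → ℕ → E) (k : ℝ) (p q : ℕ) (d : ℝ) (f : ℂ × ℂ → E) : Prop :=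
  ∃ a₀ b₀ r : ℝ, Real.pi / k < b₀ - a₀ ∧ d = (a₀ + b₀) / 2 ∧ 0 < r ∧
    DifferentiableOn ℂ f (MSector p q a₀ b₀ r) ∧ HasMAsymp a (1 / k) p q f a₀ b₀ r

/-- `k`-summability in the monomial `x₁^p x₂^q` in direction `d`. -/
def MSummableDir (a : ℕ → ℕ → E) (k : ℝ) (p q : ℕ) (d : ℝ) : Prop :=
  ∃ f : ℂ × ℂ → E, IsMSum a k p q d f

/-- `k`-summability in the monomial `x₁^p x₂^q` : summability in every direction outside
finitely many exceptional directions mod `2π`. -/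
def MSummable (a : ℕ → ℕ → E) (k : ℝ) (p q : ℕ) : Prop :=
  ∃ D : Finset ℝ, ∀ d : ℝ, (∀ e ∈ D, ∀ m : ℤ, d ≠ e + 2 * Real.pi * m) →
    MSummableDir a k p q d

/-- Coefficients of `f̂ ∘ π₁`, where `π₁(x₁,x₂) = (x₁x₂, x₂)`. -/
def blowCoeff₁ (a : ℕ → ℕ → E) : ℕ → ℕ → E := fun n m => if n ≤ m then a n (m - n) else 0

/-- Coefficients of `f̂ ∘ π₂`, where `π₂(x₁,x₂) = (x₁, x₁x₂)`. -/
def blowCoeff₂ (a : ℕ → ℕ → E) : ℕ → ℕ → E := fun n m => if m ≤ n then a (n - m) m else 0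

/-- The sector `V(a,b,r)` in one variable. -/
def Sector1 (a b r : ℝ) : Set ℂ :=
  {x | x ≠ 0 ∧ ‖x‖ < r ∧ ∃ θ : ℝ, a < θ ∧ θ < b ∧
    x = (‖x‖ : ℂ) * Complex.exp (θ * Complex.I)}

/-- `f` is a `k`-sum in the variable `x₁`, in direction `d`, of the series
`Σ c n (x₂) x₁ⁿ` with coefficients `c n` holomorphic and bounded on the disk `D_R`. -/
def IsSum1 (c : ℕ → ℂ → E) (R k d : ℝ) (f : ℂ → ℂ → E) : Prop :=
  ∃ a₀ b₀ r : ℝ, Real.pi / k < b₀ - a₀ ∧ d = (a₀ + b₀) / 2 ∧ 0 < r ∧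
    DifferentiableOn ℂ (fun z : ℂ × ℂ => f z.1 z.2) (Sector1 a₀ b₀ r ×ˢ Metric.ball (0 : ℂ) R) ∧
    ∀ a' b' r' : ℝ, a₀ < a' → a' < b' → b' < b₀ → 0 < r' → r' < r →
      ∃ C A : ℝ, 0 < C ∧ 0 < A ∧ ∀ N : ℕ, ∀ x₁ ∈ Sector1 a' b' r', ∀ x₂ ∈ Metric.ball (0 : ℂ) R,
        ‖f x₁ x₂ - ∑ n ∈ Finset.range N, x₁ ^ n • c n x₂‖ ≤
          C * A ^ N * (N.factorial : ℝ) ^ (1 / k) * ‖x₁‖ ^ N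

/-- `k`-summability in the first variable, in direction `d`. -/
def Summable1Dir (c : ℕ → ℂ → E) (R k d : ℝ) : Prop := ∃ f, IsSum1 c R k d f

/-- `k`-summability in the first variable : summability in every direction outside
finitely many exceptional directions mod `2π`. -/
def Summable1 (c : ℕ → ℂ → E) (R k : ℝ) : Prop :=
  ∃ D : Finset ℝ, ∀ d : ℝ, (∀ e ∈ D, ∀ m : ℤ, d ≠ e + 2 * Real.pi * m) →
    Summable1Dir c R k d

/-- The rows `x₂ ↦ Σ_m a n m x₂^m` of a double series. -/
def rowFn (a : ℕ → ℕ → E) (n : ℕ) (x : ℂ) : E := ∑' m : ℕ, x ^ m • a n m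

/-- The columns `x₁ ↦ Σ_n a n m x₁^n` of a double series. -/
def colFn (a : ℕ → ℕ → E) (m : ℕ) (x : ℂ) : E := ∑' n : ℕ, x ^ n • a n m

/-- Each row of `a` converges and defines a bounded (holomorphic) function on `D_r`. -/
def RowsGood (a : ℕ → ℕ → E) (r : ℝ) : Prop :=
  ∀ n : ℕ, (∀ x : ℂ, ‖x‖ < r → Summable fun m : ℕ => x ^ m • a n m) ∧
    ∃ M : ℝ, ∀ x : ℂ, ‖x‖ < r → ‖rowFn a n x‖ ≤ M

/-- Each column of `a` converges and defines a bounded (holomorphic) function on `D_r`. -/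
def ColsGood (a : ℕ → ℕ → E) (r : ℝ) : Prop :=
  ∀ m : ℕ, (∀ x : ℂ, ‖x‖ < r → Summable fun n : ℕ => x ^ n • a n m) ∧
    ∃ M : ℝ, ∀ x : ℂ, ‖x‖ < r → ‖colFn a m x‖ ≤ M

private lemma min_rpow_fact_le (p q : ℕ) (hp : 0 < p) (hq : 0 < q) (s : ℝ) (hs : 0 ≤ s)
    (n k : ℕ) :
    min ((n.factorial : ℝ) ^ (s / (p : ℝ))) ((k.factorial : ℝ) ^ (s / (q : ℝ))) ≤
      (((n + k).factorial : ℝ)) ^ (s / ((p : ℝ) + (q : ℝ))) := by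
  have hp' : (0:ℝ) < p := Nat.cast_pos.mpr hp
  have hq' : (0:ℝ) < q := Nat.cast_pos.mpr hq
  have hpq : (0:ℝ) < (p:ℝ) + q := by linarith
  have hn : (1:ℝ) ≤ n.factorial := Nat.one_le_cast.mpr n.factorial_pos
  have hk : (1:ℝ) ≤ k.factorial := Nat.one_le_cast.mpr k.factorial_pos
  have hn0 : (0:ℝ) < n.factorial := lt_of_lt_of_le one_pos hn
  have hk0 : (0:ℝ) < k.factorial := lt_of_lt_of_le one_pos hk
  have hmul : (n.factorial : ℝ) * k.factorial ≤ (n+k).factorial := by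
    exact_mod_cast Nat.le_of_dvd (n+k).factorial_pos
      (Nat.factorial_mul_factorial_dvd_factorial_add n k)
  have step : min ((n.factorial : ℝ) ^ (s / (p:ℝ))) ((k.factorial : ℝ) ^ (s / (q:ℝ))) ≤
      ((n.factorial : ℝ) * k.factorial) ^ (s / ((p:ℝ) + q)) := by
    rw [Real.mul_rpow (by positivity) (by positivity)]
    rcases le_total ((n.factorial : ℝ) ^ (s / (p:ℝ))) ((k.factorial : ℝ) ^ (s / (q:ℝ)))
      with h | h
    · rw [min_eq_left h]
      have h2 : ((n.factorial : ℝ) ^ (s / (p:ℝ))) ^ ((q:ℝ) / ((p:ℝ) + q)) ≤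
          ((k.factorial : ℝ) ^ (s / (q:ℝ))) ^ ((q:ℝ) / ((p:ℝ) + q)) :=
        Real.rpow_le_rpow (by positivity) h (by positivity)
      rw [← Real.rpow_mul hn0.le, ← Real.rpow_mul hk0.le] at h2
      have e2 : s / (q:ℝ) * ((q:ℝ) / ((p:ℝ) + q)) = s / ((p:ℝ) + q) := by
        field_simp
      rw [e2] at h2
      have e1 : s / (p:ℝ) = s / ((p:ℝ) + q) + s / (p:ℝ) * ((q:ℝ) / ((p:ℝ) + q)) := by
        field_simp
      rw [e1, Real.rpow_add hn0]
      exact mul_le_mul_of_nonneg_left h2 (by positivity)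
    · rw [min_eq_right h]
      have h2 : ((k.factorial : ℝ) ^ (s / (q:ℝ))) ^ ((p:ℝ) / ((p:ℝ) + q)) ≤
          ((n.factorial : ℝ) ^ (s / (p:ℝ))) ^ ((p:ℝ) / ((p:ℝ) + q)) :=
        Real.rpow_le_rpow (by positivity) h (by positivity)
      rw [← Real.rpow_mul hn0.le, ← Real.rpow_mul hk0.le] at h2
      have e2 : s / (p:ℝ) * ((p:ℝ) / ((p:ℝ) + q)) = s / ((p:ℝ) + q) := by
        field_simp
      rw [e2] at h2
      have e1 : s / (q:ℝ) = s / (q:ℝ) * ((p:ℝ) / ((p:ℝ) + q)) + s / ((p:ℝ) + q) := by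
        field_simp
      rw [e1, Real.rpow_add hk0]
      exact mul_le_mul_of_nonneg_right h2 (by positivity)
  exact step.trans (Real.rpow_le_rpow (by positivity) hmul (by positivity))

/-- **Lemma.** `f̂` is `s`-Gevrey in `x₁^p x₂^q` iff `f̂∘π₁` is `s`-Gevrey in
`x₁^p x₂^{p+q}` and `f̂∘π₂` is `s`-Gevrey in `x₁^{p+q} x₂^q`. -/
theorem monomialGevrey_blowup_iff
    (p q : ℕ) (hp : 0 < p) (hq : 0 < q) (s : ℝ) (hs : 0 ≤ s)
    (a : ℕ → ℕ → E) :
    MonomialGevrey s p q a ↔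
      (MonomialGevrey s p (p + q) (blowCoeff₁ a) ∧ MonomialGevrey s (p + q) q (blowCoeff₂ a)) := by
  have hcast : ((p + q : ℕ) : ℝ) = (p : ℝ) + (q : ℝ) := by push_cast; ring
  constructor
  · rintro ⟨C, A, hC, hA, hbd⟩
    have hA1 : (0:ℝ) < max A 1 := lt_max_of_lt_right one_pos
    have hA1' : (1:ℝ) ≤ max A 1 := le_max_right A 1
    constructor
    · refine ⟨C, max A 1, hC, hA1, fun n m => ?_⟩
      by_cases h : n ≤ m
      · have hb : blowCoeff₁ a n m = a n (m - n) := if_pos h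
        rw [hb]
        have hmin : min ((n.factorial : ℝ) ^ (s / (p:ℝ))) (((m - n).factorial : ℝ) ^ (s / (q:ℝ)))
            ≤ min ((n.factorial : ℝ) ^ (s / (p:ℝ))) ((m.factorial : ℝ) ^ (s / ((p + q : ℕ) : ℝ))) := by
          refine le_min (min_le_left _ _) ?_
          have := min_rpow_fact_le p q hp hq s hs n (m - n)
          rw [Nat.add_sub_cancel' h] at this
          rw [hcast]
          exact this
        have hpow : A ^ (n + (m - n)) ≤ (max A 1) ^ (n + m) := by
          calc A ^ (n + (m - n)) ≤ (max A 1) ^ (n + (m - n)) :=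
                pow_le_pow_left₀ hA.le (le_max_left A 1) _
            _ ≤ (max A 1) ^ (n + m) :=
                pow_le_pow_right₀ hA1' (by omega)
        calc ‖a n (m - n)‖ ≤ C * A ^ (n + (m - n)) * min _ _ := hbd n (m - n)
          _ ≤ C * (max A 1) ^ (n + m) *
              min ((n.factorial : ℝ) ^ (s / (p:ℝ))) ((m.factorial : ℝ) ^ (s / ((p + q : ℕ) : ℝ))) := by
            have h1 : (0:ℝ) ≤ min ((n.factorial : ℝ) ^ (s / (p:ℝ)))
                (((m - n).factorial : ℝ) ^ (s / (q:ℝ))) := le_min (by positivity) (by positivity)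
            exact mul_le_mul (mul_le_mul le_rfl hpow (by positivity) hC.le) hmin h1
              (by positivity)
      · have hb : blowCoeff₁ a n m = 0 := if_neg h
        rw [hb, norm_zero]
        have : (0:ℝ) ≤ min ((n.factorial : ℝ) ^ (s / (p:ℝ)))
            ((m.factorial : ℝ) ^ (s / ((p + q : ℕ) : ℝ))) := le_min (by positivity) (by positivity)
        positivity
    · refine ⟨C, max A 1, hC, hA1, fun n m => ?_⟩
      by_cases h : m ≤ n
      · have hb : blowCoeff₂ a n m = a (n - m) m := if_pos h
        rw [hb]
        have hmin : min (((n - m).factorial : ℝ) ^ (s / (p:ℝ))) ((m.factorial : ℝ) ^ (s / (q:ℝ)))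
            ≤ min ((n.factorial : ℝ) ^ (s / ((p + q : ℕ) : ℝ))) ((m.factorial : ℝ) ^ (s / (q:ℝ))) := by
          refine le_min ?_ (min_le_right _ _)
          have := min_rpow_fact_le p q hp hq s hs (n - m) m
          rw [Nat.sub_add_cancel h] at this
          rw [hcast]
          exact this
        have hpow : A ^ (n - m + m) ≤ (max A 1) ^ (n + m) := by
          calc A ^ (n - m + m) ≤ (max A 1) ^ (n - m + m) :=
                pow_le_pow_left₀ hA.le (le_max_left A 1) _
            _ ≤ (max A 1) ^ (n + m) :=
                pow_le_pow_right₀ hA1' (by omega)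
        calc ‖a (n - m) m‖ ≤ C * A ^ (n - m + m) * min _ _ := hbd (n - m) m
          _ ≤ C * (max A 1) ^ (n + m) *
              min ((n.factorial : ℝ) ^ (s / ((p + q : ℕ) : ℝ))) ((m.factorial : ℝ) ^ (s / (q:ℝ))) := by
            have h1 : (0:ℝ) ≤ min (((n - m).factorial : ℝ) ^ (s / (p:ℝ)))
                ((m.factorial : ℝ) ^ (s / (q:ℝ))) := le_min (by positivity) (by positivity)
            exact mul_le_mul (mul_le_mul le_rfl hpow (by positivity) hC.le) hmin h1
              (by positivity)
      · have hb : blowCoeff₂ a n m = 0 := if_neg h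
        rw [hb, norm_zero]
        have : (0:ℝ) ≤ min ((n.factorial : ℝ) ^ (s / ((p + q : ℕ) : ℝ)))
            ((m.factorial : ℝ) ^ (s / (q:ℝ))) := le_min (by positivity) (by positivity)
        positivity
  · rintro ⟨⟨C1, A1, hC1, hA1, h1⟩, ⟨C2, A2, hC2, hA2, h2⟩⟩
    set B : ℝ := max (max A1 A2) 1 with hBdef
    have hB1 : (1:ℝ) ≤ B := le_max_right _ 1
    have hB0 : (0:ℝ) < B := lt_of_lt_of_le one_pos hB1
    have hA1B : A1 ≤ B := le_trans (le_max_left A1 A2) (le_max_left _ 1)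
    have hA2B : A2 ≤ B := le_trans (le_max_right A1 A2) (le_max_left _ 1)
    refine ⟨max C1 C2, B ^ 2, lt_max_of_lt_left hC1, by positivity, fun n m => ?_⟩
    have bound1 : ‖a n m‖ ≤ max C1 C2 * (B ^ 2) ^ (n + m) * (n.factorial : ℝ) ^ (s / (p:ℝ)) := by
      have e1 := h1 n (n + m)
      have hb : blowCoeff₁ a n (n + m) = a n m := by
        simp [blowCoeff₁, Nat.le_add_right]
      rw [hb] at e1
      have hpow : A1 ^ (n + (n + m)) ≤ (B ^ 2) ^ (n + m) := by
        rw [← pow_mul]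
        calc A1 ^ (n + (n + m)) ≤ B ^ (n + (n + m)) := pow_le_pow_left₀ hA1.le hA1B _
          _ ≤ B ^ (2 * (n + m)) := pow_le_pow_right₀ hB1 (by omega)
      calc ‖a n m‖ ≤ C1 * A1 ^ (n + (n + m)) * min _ _ := e1
        _ ≤ max C1 C2 * (B ^ 2) ^ (n + m) * (n.factorial : ℝ) ^ (s / (p:ℝ)) := by
          refine mul_le_mul (mul_le_mul (le_max_left _ _) hpow (by positivity)
            (by positivity)) (min_le_left _ _) (le_min (by positivity) (by positivity))
            (by positivity)
    have bound2 : ‖a n m‖ ≤ max C1 C2 * (B ^ 2) ^ (n + m) * (m.factorial : ℝ) ^ (s / (q:ℝ)) := by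
      have e2 := h2 (n + m) m
      have hb : blowCoeff₂ a (n + m) m = a n m := by
        simp [blowCoeff₂, Nat.le_add_left]
      rw [hb] at e2
      have hpow : A2 ^ (n + m + m) ≤ (B ^ 2) ^ (n + m) := by
        rw [← pow_mul]
        calc A2 ^ (n + m + m) ≤ B ^ (n + m + m) := pow_le_pow_left₀ hA2.le hA2B _
          _ ≤ B ^ (2 * (n + m)) := pow_le_pow_right₀ hB1 (by omega)
      calc ‖a n m‖ ≤ C2 * A2 ^ (n + m + m) * min _ _ := e2
        _ ≤ max C1 C2 * (B ^ 2) ^ (n + m) * (m.factorial : ℝ) ^ (s / (q:ℝ)) := by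
          refine mul_le_mul (mul_le_mul (le_max_right _ _) hpow (by positivity)
            (by positivity)) (min_le_right _ _) (le_min (by positivity) (by positivity))
            (by positivity)
    have hdist : max C1 C2 * (B ^ 2) ^ (n + m) *
        min ((n.factorial : ℝ) ^ (s / (p:ℝ))) ((m.factorial : ℝ) ^ (s / (q:ℝ))) =
        min (max C1 C2 * (B ^ 2) ^ (n + m) * (n.factorial : ℝ) ^ (s / (p:ℝ)))
          (max C1 C2 * (B ^ 2) ^ (n + m) * (m.factorial : ℝ) ^ (s / (q:ℝ))) := by
      exact mul_min_of_nonneg _ _ (by positivity)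
    rw [hdist]
    exact le_min bound1 bound2
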